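/- Let n, k, r, p be positive integers with r dividing n, 1 < p ≤ r, and p ≤ k ≤ n, and let V be an n-element vertex set. For every r-coloring χ of V and every balanced r-coloring χ₀ of V, the number of k-element subsets of V properly (r,p) colored by χ is at most the number of k-element subsets of V properly (r,p) colored by χ₀. In particular, the maximum over all r-colorings of the number of properly (r,p) colored k-element subsets is attained by a coloring that splits V into r equal-sized parts. -/

import Mathlib

open Finset
set_option linter.unusedSectionVars false
set_option maxHeartbeats 1000000

section Helpers
variable {V : Type*} [Fintype V] [DecidableEq V] {r : ℕ}

def pCount (k p : ℕ) (χ : V → Fin r) : ℕ :=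
  (((Finset.univ : Finset V).powersetCard k).filter
      (fun e : Finset V => p ≤ (e.image χ).card)).card

lemma aux_iff {S : Finset (Fin r)} {i j : Fin r} (p : ℕ) :
    (p ≤ (insert i S).card ∧ ¬ p ≤ (insert j S).card) ↔
      (S.card + 1 = p ∧ i ∉ S ∧ j ∈ S) := by
  constructor
  · rintro ⟨h1, h2⟩
    push_neg at h2
    have hc1 := Finset.card_insert_le i S
    have hc2 := Finset.card_le_card (Finset.subset_insert j S)
    have hiS : i ∉ S := by
      intro h
      rw [Finset.insert_eq_self.mpr h] at h1
      omega
    have hjS : j ∈ S := by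
      by_contra h
      rw [Finset.card_insert_of_notMem h] at h2
      omega
    exact ⟨by omega, hiS, hjS⟩
  · rintro ⟨h, hi, hj⟩
    rw [Finset.card_insert_of_notMem hi, Finset.insert_eq_self.mpr hj]
    omega

lemma image_filter_ne (s : Finset V) (χ : V → Fin r) (j : Fin r) :
    (s.filter (fun u => χ u ≠ j)).image χ = (s.image χ).erase j := by
  ext c
  simp only [Finset.mem_image, Finset.mem_filter, Finset.mem_erase]
  constructor
  · rintro ⟨u, ⟨hu, hne⟩, rfl⟩
    exact ⟨hne, u, hu, rfl⟩
  · rintro ⟨hne, u, hu, rfl⟩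
    exact ⟨u, ⟨hu, hne⟩, rfl⟩

lemma pCount_le_update (k p : ℕ) (χ : V → Fin r) (v : V) (j : Fin r)
    (hj : χ v ≠ j)
    (hsz : (univ.filter fun u : V => χ u = j).card + 2 ≤
      (univ.filter fun u : V => χ u = χ v).card) :
    pCount k p χ ≤ pCount k p (Function.update χ v j) := by
  classical
  set i := χ v with hvi
  set χ' := Function.update χ v j with hχ'
  have hχ'v : χ' v = j := Function.update_self v j χ
  have hχ'ne : ∀ u : V, u ≠ v → χ' u = χ u := fun u hu => Function.update_of_ne hu j χ
  set P : Finset (Finset V) := (Finset.univ : Finset V).powersetCard k with hP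
  have hij : i ≠ j := hj
  -- image of a set containing v
  have himg : ∀ (ψ : V → Fin r) (e : Finset V), v ∈ e →
      e.image ψ = insert (ψ v) ((e.erase v).image ψ) := by
    intro ψ e hve
    conv_lhs => rw [← Finset.insert_erase hve]
    rw [Finset.image_insert]
  have himg_erase : ∀ e : Finset V, (e.erase v).image χ' = (e.erase v).image χ := by
    intro e
    exact Finset.image_congr (fun u hu => hχ'ne u (Finset.ne_of_mem_erase hu))
  -- step 1 : split by membership of v
  have split1 : ∀ ψ : V → Fin r, pCount k p ψ =
      (P.filter (fun e => p ≤ (e.image ψ).card ∧ v ∈ e)).card +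
      (P.filter (fun e => p ≤ (e.image ψ).card ∧ v ∉ e)).card := by
    intro ψ
    unfold pCount
    rw [← Finset.filter_filter, ← Finset.filter_filter]
    exact (Finset.card_filter_add_card_filter_not (fun e => v ∈ e)).symm
  have hout : P.filter (fun e => p ≤ (e.image χ).card ∧ v ∉ e)
      = P.filter (fun e => p ≤ (e.image χ').card ∧ v ∉ e) := by
    refine Finset.filter_congr fun e _ => ?_
    by_cases hve : v ∈ e
    · simp [hve]
    · have : e.image χ' = e.image χ :=
        Finset.image_congr (fun u hu => hχ'ne u (fun h => hve (h ▸ hu)))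
      rw [this]
  rw [split1 χ, split1 χ', hout]
  refine Nat.add_le_add_right ?_ _
  -- step 2 : split by properness under the other coloring
  have split2 : ∀ ψ ψ₂ : V → Fin r,
      (P.filter (fun e => p ≤ (e.image ψ).card ∧ v ∈ e)).card =
      (P.filter (fun e => (p ≤ (e.image ψ).card ∧ v ∈ e) ∧ p ≤ (e.image ψ₂).card)).card +
      (P.filter (fun e => (p ≤ (e.image ψ).card ∧ v ∈ e) ∧ ¬ p ≤ (e.image ψ₂).card)).card := by
    intro ψ ψ₂
    have := Finset.card_filter_add_card_filter_not
      (s := P.filter (fun e => p ≤ (e.image ψ).card ∧ v ∈ e))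
      (p := fun e : Finset V => p ≤ (e.image ψ₂).card)
    rw [Finset.filter_filter, Finset.filter_filter] at this
    exact this.symm
  rw [split2 χ χ', split2 χ' χ]
  have hboth : P.filter (fun e => (p ≤ (e.image χ).card ∧ v ∈ e) ∧ p ≤ (e.image χ').card)
      = P.filter (fun e => (p ≤ (e.image χ').card ∧ v ∈ e) ∧ p ≤ (e.image χ).card) := by
    refine Finset.filter_congr fun e _ => ?_
    tauto
  rw [hboth]
  refine Nat.add_le_add_left ?_ _
  -- characterization of the exceptional sets
  have char : ∀ (ψ₁ ψ₂ : V → Fin r) (c₁ c₂ : Fin r), ψ₁ v = c₁ → ψ₂ v = c₂ →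
      (∀ u : V, u ≠ v → ψ₂ u = ψ₁ u) →
      ∀ e : Finset V, v ∈ e →
      ((p ≤ (e.image ψ₁).card ∧ ¬ p ≤ (e.image ψ₂).card) ↔
        (((e.erase v).image ψ₁).card + 1 = p ∧ c₁ ∉ (e.erase v).image ψ₁ ∧
          c₂ ∈ (e.erase v).image ψ₁)) := by
    intro ψ₁ ψ₂ c₁ c₂ h1 h2 hagree e hve
    have e2 : (e.erase v).image ψ₂ = (e.erase v).image ψ₁ :=
      Finset.image_congr (fun u hu => hagree u (Finset.ne_of_mem_erase hu))
    rw [himg ψ₁ e hve, himg ψ₂ e hve, h1, h2, e2]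
    exact aux_iff p
  -- the injection map
  obtain ⟨f, hfmaps, hfinj⟩ : ∃ f : V → V,
      (↑(univ.filter fun u : V => χ u = j) : Set V) ⊆
        f ⁻¹' ↑((univ.filter fun u : V => χ u = i).erase v) ∧
      Set.InjOn f ↑(univ.filter fun u : V => χ u = j) := by
    have hvmem : v ∈ univ.filter fun u : V => χ u = i := by
      simp [hvi]
    have : Nonempty V := ⟨v⟩
    apply Set.Finite.exists_injOn_of_encard_le (Finset.finite_toSet _)
    rw [Set.encard_coe_eq_coe_finsetCard, Set.encard_coe_eq_coe_finsetCard,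
      Finset.card_erase_of_mem hvmem]
    exact_mod_cast by omega
  have hfm : ∀ u : V, χ u = j → (χ (f u) = i ∧ f u ≠ v) := by
    intro u hu
    have h1 : u ∈ (↑(univ.filter fun u : V => χ u = j) : Set V) := by
      simp [hu]
    have := hfmaps h1
    simp only [Set.mem_preimage, Finset.coe_erase, Set.mem_diff, Finset.mem_coe,
      Finset.mem_filter, Set.mem_singleton_iff] at this
    exact ⟨this.1.2, this.2⟩
  set Φ : Finset V → Finset V := fun e =>
    (e.filter fun u => χ u ≠ j) ∪ (e.filter fun u => χ u = j).image f with hΦ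
  -- facts about an exceptional set
  have main_facts : ∀ e : Finset V,
      e ∈ P.filter (fun e => (p ≤ (e.image χ).card ∧ v ∈ e) ∧ ¬ p ≤ (e.image χ').card) →
      (Φ e).filter (fun u => χ u = i ∧ u ≠ v) = (e.filter fun u => χ u = j).image f ∧
      (Φ e).filter (fun u => ¬(χ u = i ∧ u ≠ v)) = e.filter (fun u => χ u ≠ j) := by
    intro e he
    simp only [Finset.mem_filter, hP, Finset.mem_powersetCard_univ] at he
    obtain ⟨hek, ⟨hprop, hve⟩, hnprop⟩ := he
    obtain ⟨hScard, hiS, hjS⟩ := (char χ χ' i j rfl hχ'v hχ'ne e hve).mp ⟨hprop, hnprop⟩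
    have hvCi : ∀ u ∈ e, χ u = i → u = v := by
      intro u hu hcu
      by_contra hne
      exact hiS (Finset.mem_image.mpr ⟨u, Finset.mem_erase.mpr ⟨hne, hu⟩, hcu⟩)
    constructor
    · ext u
      simp only [Finset.mem_filter, hΦ, Finset.mem_union, Finset.mem_image]
      constructor
      · rintro ⟨hu | ⟨w, hw, rfl⟩, hci, hnev⟩
        · exact absurd (hvCi u hu.1 hci) hnev
        · exact ⟨w, hw, rfl⟩
      · rintro ⟨w, hw, rfl⟩
        obtain ⟨h1, h2⟩ := hfm w hw.2
        exact ⟨Or.inr ⟨w, hw, rfl⟩, h1, h2⟩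
    · ext u
      simp only [Finset.mem_filter, hΦ, Finset.mem_union, Finset.mem_image]
      constructor
      · rintro ⟨hu | ⟨w, hw, rfl⟩, hnot⟩
        · exact hu
        · obtain ⟨h1, h2⟩ := hfm w hw.2
          exact absurd ⟨h1, h2⟩ hnot
      · rintro ⟨hu, hne⟩
        exact ⟨Or.inl ⟨hu, hne⟩, fun h => h.2 (hvCi u hu h.1)⟩
  apply Finset.card_le_card_of_injOn Φ
  · -- maps to
    intro e he
    have hfacts := main_facts e he
    simp only [Finset.mem_coe, Finset.mem_filter, hP, Finset.mem_powersetCard_univ] at he ⊢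
    obtain ⟨hek, ⟨hprop, hve⟩, hnprop⟩ := he
    obtain ⟨hScard, hiS, hjS⟩ := (char χ χ' i j rfl hχ'v hχ'ne e hve).mp ⟨hprop, hnprop⟩
    set S := (e.erase v).image χ with hS
    have hvCi : ∀ u ∈ e, χ u = i → u = v := by
      intro u hu hcu
      by_contra hne
      exact hiS (Finset.mem_image.mpr ⟨u, Finset.mem_erase.mpr ⟨hne, hu⟩, hcu⟩)
    have hCj_ne : (e.filter fun u => χ u = j).Nonempty := by
      obtain ⟨u, hu, hcu⟩ := Finset.mem_image.mp hjS
      exact ⟨u, Finset.mem_filter.mpr ⟨(Finset.mem_erase.mp hu).2, hcu⟩⟩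
    have hdisj : Disjoint (e.filter fun u => χ u ≠ j)
        ((e.filter fun u => χ u = j).image f) := by
      rw [Finset.disjoint_left]
      intro u hu hu2
      obtain ⟨w, hw, rfl⟩ := Finset.mem_image.mp hu2
      obtain ⟨h1, h2⟩ := hfm w (Finset.mem_filter.mp hw).2
      exact h2 (hvCi _ (Finset.mem_filter.mp hu).1 h1)
    have hinjCj : Set.InjOn f ↑(e.filter fun u => χ u = j) := by
      refine hfinj.mono ?_
      intro u hu
      rw [Finset.mem_coe, Finset.mem_filter] at hu
      rw [Finset.mem_coe, Finset.mem_filter]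
      exact ⟨Finset.mem_univ u, hu.2⟩
    have hcard : (Φ e).card = k := by
      rw [hΦ]
      simp only
      rw [Finset.card_union_of_disjoint hdisj, Finset.card_image_of_injOn hinjCj, ← hek,
        add_comm]
      exact Finset.card_filter_add_card_filter_not (fun u => χ u = j)
    have hvΦ : v ∈ Φ e := by
      rw [hΦ]
      exact Finset.mem_union_left _ (Finset.mem_filter.mpr ⟨hve, hj⟩)
    have himgf : ((e.filter fun u => χ u = j).image f).image χ = {i} := by
      apply Finset.eq_singleton_iff_nonempty_unique_mem.mpr
      refine ⟨(hCj_ne.image f).image χ, ?_⟩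
      intro c hc
      obtain ⟨w, hw, rfl⟩ := Finset.mem_image.mp hc
      obtain ⟨u, hu, rfl⟩ := Finset.mem_image.mp hw
      exact (hfm u (Finset.mem_filter.mp hu).2).1
    have heimg : e.image χ = insert i S := by
      rw [himg χ e hve, ← hvi]
    have hΦimg : (Φ e).image χ = insert i (S.erase j) := by
      rw [hΦ]
      simp only
      rw [Finset.image_union, image_filter_ne, himgf, heimg,
        Finset.erase_insert_of_ne hij, Finset.union_comm, ← Finset.insert_eq, Finset.insert_idem]
    have hSpos : 0 < S.card := Finset.card_pos.mpr ⟨j, hjS⟩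
    have hiSe : i ∉ S.erase j := fun h => hiS (Finset.mem_of_mem_erase h)
    have hcardT : (insert i (S.erase j)).card = S.card := by
      rw [Finset.card_insert_of_notMem hiSe, Finset.card_erase_of_mem hjS]
      omega
    have hvnotimgf : v ∉ (e.filter fun u => χ u = j).image f := by
      intro h
      obtain ⟨w, hw, hfw⟩ := Finset.mem_image.mp h
      exact (hfm w (Finset.mem_filter.mp hw).2).2 hfw
    have hΦerase : (Φ e).erase v =
        ((e.erase v).filter fun u => χ u ≠ j) ∪ (e.filter fun u => χ u = j).image f := by
      rw [hΦ]
      simp only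
      rw [Finset.erase_union_distrib, Finset.erase_eq_of_notMem hvnotimgf]
      congr 1
      ext u
      simp only [Finset.mem_erase, Finset.mem_filter]
      tauto
    have himgf_e : ((e.erase v).filter fun u => χ u ≠ j).image χ = S.erase j := by
      rw [image_filter_ne, hS]
    have hΦimg' : (Φ e).image χ' = insert j (insert i (S.erase j)) := by
      rw [himg χ' (Φ e) hvΦ, hχ'v, himg_erase, hΦerase, Finset.image_union, himgf_e,
        himgf, Finset.union_comm, ← Finset.insert_eq]
    have hjT : j ∉ insert i (S.erase j) := by
      simp only [Finset.mem_insert]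
      rintro (h | h)
      · exact hij h.symm
      · exact (Finset.notMem_erase j S) h
    refine ⟨hcard, ⟨?_, hvΦ⟩, ?_⟩
    · rw [hΦimg', Finset.card_insert_of_notMem hjT, hcardT]
      omega
    · rw [hΦimg, hcardT]
      omega
  · -- injectivity
    intro e₁ h1 e₂ h2 heq
    obtain ⟨R1a, R2a⟩ := main_facts e₁ h1
    obtain ⟨R1b, R2b⟩ := main_facts e₂ h2
    have hD : e₁.filter (fun u => χ u ≠ j) = e₂.filter (fun u => χ u ≠ j) := by
      rw [← R2a, ← R2b, heq]
    have hIm : (e₁.filter fun u => χ u = j).image f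
        = (e₂.filter fun u => χ u = j).image f := by
      rw [← R1a, ← R1b, heq]
    have hC : e₁.filter (fun u => χ u = j) = e₂.filter (fun u => χ u = j) := by
      ext u
      constructor
      · intro hu
        have : f u ∈ (e₂.filter fun u => χ u = j).image f := by
          rw [← hIm]
          exact Finset.mem_image_of_mem f hu
        obtain ⟨w, hw, hfw⟩ := Finset.mem_image.mp this
        have hu' := Finset.mem_filter.mp hu
        have hw' := Finset.mem_filter.mp hw
        have : w = u := hfinj (by simp [hw'.2]) (by simp [hu'.2]) hfw
        rwa [← this]
      · intro hu
        have : f u ∈ (e₁.filter fun u => χ u = j).image f := by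
          rw [hIm]
          exact Finset.mem_image_of_mem f hu
        obtain ⟨w, hw, hfw⟩ := Finset.mem_image.mp this
        have hu' := Finset.mem_filter.mp hu
        have hw' := Finset.mem_filter.mp hw
        have : w = u := hfinj (by simp [hw'.2]) (by simp [hu'.2]) hfw
        rwa [← this]
    have key : ∀ e : Finset V,
        e = e.filter (fun u => χ u = j) ∪ e.filter (fun u => χ u ≠ j) :=
      fun e => (Finset.filter_union_filter_not_eq (fun u => χ u = j) e).symm
    rw [key e₁, key e₂, hC, hD]

lemma pCount_eq_of_fibers (k p : ℕ) (χ χ' : V → Fin r)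
    (h : ∀ c, (univ.filter fun v => χ v = c).card = (univ.filter fun v => χ' v = c).card) :
    pCount k p χ = pCount k p χ' := by
  have hcard : ∀ c, Fintype.card {v // χ v = c} = Fintype.card {v // χ' v = c} := by
    intro c
    simpa [Fintype.card_subtype] using h c
  let E : ∀ c, {v // χ v = c} ≃ {v // χ' v = c} := fun c => Fintype.equivOfCardEq (hcard c)
  let σ : V ≃ V :=
    ((Equiv.sigmaFiberEquiv χ).symm.trans (Equiv.sigmaCongrRight E)).trans
      (Equiv.sigmaFiberEquiv χ')
  have hσ : ∀ v, χ' (σ v) = χ v := by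
    intro v
    have : σ v = ((E (χ v)) ⟨v, rfl⟩ : {w // χ' w = χ v}) := by
      simp [σ, Equiv.sigmaFiberEquiv, Equiv.sigmaCongrRight]
    rw [this]
    exact ((E (χ v)) ⟨v, rfl⟩).2
  unfold pCount
  apply Finset.card_nbij' (i := fun e => e.map σ.toEmbedding)
      (j := fun e => e.map σ.symm.toEmbedding)
  · intro e he
    simp only [Finset.mem_coe, mem_filter, Finset.mem_powersetCard_univ, Finset.card_map] at he ⊢
    refine ⟨he.1, ?_⟩
    have : (e.map σ.toEmbedding).image χ' = e.image χ := by
      rw [Finset.map_eq_image, Finset.image_image]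
      exact Finset.image_congr (fun v _ => hσ v)
    rw [this]; exact he.2
  · intro e he
    simp only [Finset.mem_coe, mem_filter, Finset.mem_powersetCard_univ, Finset.card_map] at he ⊢
    refine ⟨he.1, ?_⟩
    have : (e.map σ.symm.toEmbedding).image χ = e.image χ' := by
      rw [Finset.map_eq_image, Finset.image_image]
      refine Finset.image_congr (fun v _ => ?_)
      have := hσ (σ.symm v)
      rw [Equiv.apply_symm_apply] at this
      exact this.symm
    rw [this]; exact he.2
  · intro e _; simp [Finset.map_map]
  · intro e _; simp [Finset.map_map]

lemma fibers_update (χ : V → Fin r) (v : V) (j : Fin r) (hj : χ v ≠ j) (c : Fin r) :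
    (univ.filter fun u : V => Function.update χ v j u = c).card =
      if c = χ v then (univ.filter fun u : V => χ u = c).card - 1
      else if c = j then (univ.filter fun u : V => χ u = c).card + 1
      else (univ.filter fun u : V => χ u = c).card := by
  classical
  by_cases hci : c = χ v
  · rw [if_pos hci]
    have hset : (univ.filter fun u : V => Function.update χ v j u = c)
        = (univ.filter fun u : V => χ u = c).erase v := by
      ext u
      simp only [Finset.mem_erase, Finset.mem_filter, Finset.mem_univ, true_and]
      by_cases huv : u = v
      · subst huv
        rw [Function.update_self]
        constructor
        · intro h
          exact absurd (h.trans hci).symm hj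
        · rintro ⟨h, -⟩
          exact absurd rfl h
      · rw [Function.update_of_ne huv]
        simp [huv]
    rw [hset, Finset.card_erase_of_mem
      (by simp only [Finset.mem_filter, Finset.mem_univ, true_and]; exact hci.symm)]
  · rw [if_neg hci]
    by_cases hcj : c = j
    · rw [if_pos hcj]
      have hset : (univ.filter fun u : V => Function.update χ v j u = c)
          = insert v (univ.filter fun u : V => χ u = c) := by
        ext u
        simp only [Finset.mem_insert, Finset.mem_filter, Finset.mem_univ, true_and]
        by_cases huv : u = v
        · subst huv
          rw [Function.update_self]
          exact iff_of_true hcj.symm (Or.inl rfl)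
        · rw [Function.update_of_ne huv]
          simp [huv]
      rw [hset, Finset.card_insert_of_notMem
        (by simp only [Finset.mem_filter, Finset.mem_univ, true_and]
            exact fun h => hci h.symm)]
    · rw [if_neg hcj]
      congr 1
      ext u
      simp only [Finset.mem_filter, Finset.mem_univ, true_and]
      by_cases huv : u = v
      · subst huv
        rw [Function.update_self]
        exact iff_of_false (fun h => hcj h.symm) (fun h => hci h.symm)
      · rw [Function.update_of_ne huv]

lemma main_ind (k p : ℕ) (m : ℕ) (hm : Fintype.card V = r * m)
    (χ₀ : V → Fin r) (hbal : ∀ c, (univ.filter fun v => χ₀ v = c).card = m) :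
    ∀ (d : ℕ) (χ : V → Fin r),
      (∑ c : Fin r, (((univ.filter fun v => χ v = c).card : ℤ) - m).natAbs) ≤ d →
      pCount k p χ ≤ pCount k p χ₀ := by
  intro d
  induction d with
  | zero =>
    intro χ hsum
    have hall : ∀ c, (univ.filter fun v => χ v = c).card = m := by
      intro c
      have h0 : (((univ.filter fun v => χ v = c).card : ℤ) - m).natAbs = 0 := by
        have := Finset.sum_eq_zero_iff.mp (Nat.le_zero.mp hsum) c (Finset.mem_univ c)
        exact this
      omega
    exact le_of_eq (pCount_eq_of_fibers k p χ χ₀ (fun c => by rw [hall c, hbal c]))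
  | succ d IH =>
    intro χ hsum
    by_cases hle : (∑ c : Fin r, (((univ.filter fun v => χ v = c).card : ℤ) - m).natAbs) ≤ d
    · exact IH χ hle
    · push_neg at hle
      -- total count
      have htot : (∑ c : Fin r, (univ.filter fun v => χ v = c).card) = r * m := by
        have h1 : (univ : Finset V).card = ∑ c : Fin r, (univ.filter fun v => χ v = c).card :=
          Finset.card_eq_sum_card_fiberwise (fun v _ => Finset.mem_univ _)
        rw [← h1, Finset.card_univ, hm]
      have hex_ne : ∃ c, (univ.filter fun v => χ v = c).card ≠ m := by
        by_contra h
        push_neg at h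
        have : (∑ c : Fin r, (((univ.filter fun v => χ v = c).card : ℤ) - m).natAbs) = 0 :=
          Finset.sum_eq_zero (fun c _ => by rw [h c]; omega)
        omega
      have hex_i : ∃ c, m < (univ.filter fun v => χ v = c).card := by
        by_contra h
        push_neg at h
        obtain ⟨c0, hc0⟩ := hex_ne
        have hlt : (univ.filter fun v => χ v = c0).card < m :=
          lt_of_le_of_ne (h c0) hc0
        have : (∑ c : Fin r, (univ.filter fun v => χ v = c).card) <
            ∑ _c : Fin r, m := by
          apply Finset.sum_lt_sum (fun c _ => h c) ⟨c0, Finset.mem_univ c0, hlt⟩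
        rw [htot] at this
        simp [Finset.sum_const, Finset.card_univ, mul_comm] at this
      have hex_j : ∃ c, (univ.filter fun v => χ v = c).card < m := by
        by_contra h
        push_neg at h
        obtain ⟨c0, hc0⟩ := hex_ne
        have hlt : m < (univ.filter fun v => χ v = c0).card :=
          lt_of_le_of_ne (h c0) (Ne.symm hc0)
        have : (∑ _c : Fin r, m) < ∑ c : Fin r, (univ.filter fun v => χ v = c).card := by
          apply Finset.sum_lt_sum (fun c _ => h c) ⟨c0, Finset.mem_univ c0, hlt⟩
        rw [htot] at this
        simp [Finset.sum_const, Finset.card_univ, mul_comm] at this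
      obtain ⟨i, hi⟩ := hex_i
      obtain ⟨j, hjlt⟩ := hex_j
      have hij : i ≠ j := by
        intro h
        rw [h] at hi
        omega
      obtain ⟨v, hv⟩ : ∃ v, v ∈ univ.filter fun u : V => χ u = i := by
        have : 0 < (univ.filter fun u : V => χ u = i).card := by omega
        exact Finset.card_pos.mp this
      have hvi : χ v = i := (Finset.mem_filter.mp hv).2
      have hstep := pCount_le_update k p χ v j (by rw [hvi]; exact hij)
        (by rw [hvi]; omega)
      refine le_trans hstep (IH (Function.update χ v j) ?_)
      -- new sum is ≤ d - 1 ≤ d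
      have hnew : ∀ c, (univ.filter fun u : V => Function.update χ v j u = c).card =
          if c = i then (univ.filter fun u : V => χ u = c).card - 1
          else if c = j then (univ.filter fun u : V => χ u = c).card + 1
          else (univ.filter fun u : V => χ u = c).card := by
        intro c
        rw [fibers_update χ v j (by rw [hvi]; exact hij) c, hvi]
      have hsum2 : (∑ c : Fin r,
            (((univ.filter fun u : V => Function.update χ v j u = c).card : ℤ) - m).natAbs)
          + 2 ≤
          ∑ c : Fin r, (((univ.filter fun v => χ v = c).card : ℤ) - m).natAbs := by
        have hrw : ∀ c : Fin r,
            (((univ.filter fun u : V => Function.update χ v j u = c).card : ℤ) - m).natAbs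
            + (if c = i then 1 else 0) + (if c = j then 1 else 0)
            ≤ (((univ.filter fun v => χ v = c).card : ℤ) - m).natAbs := by
          intro c
          rw [hnew c]
          by_cases hci : c = i
          · subst hci
            rw [if_pos rfl, if_pos rfl, if_neg hij]
            have : 0 < (univ.filter fun v_1 => χ v_1 = c).card := by omega
            omega
          · rw [if_neg hci, if_neg hci]
            by_cases hcj : c = j
            · subst hcj
              rw [if_pos rfl, if_pos rfl]
              omega
            · rw [if_neg hcj, if_neg hcj]
              omega
        calc (∑ c : Fin r,
            (((univ.filter fun u : V => Function.update χ v j u = c).card : ℤ) - m).natAbs) + 2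
            = ∑ c : Fin r,
              ((((univ.filter fun u : V => Function.update χ v j u = c).card : ℤ) - m).natAbs
              + (if c = i then 1 else 0) + (if c = j then 1 else 0)) := by
              rw [Finset.sum_add_distrib, Finset.sum_add_distrib]
              simp [Finset.sum_ite_eq']
          _ ≤ _ := Finset.sum_le_sum (fun c _ => hrw c)
      omega

end Helpers

/-- With `r ∣ n`, every balanced `r`-coloring maximizes, over all `r`-colorings, the number of
properly `(r,p)` colored `k`-element subsets. -/
theorem stmt_3 (n k r p : ℕ) (hn : 0 < n) (hk : 0 < k) (hr : 0 < r) (hp : 1 < p)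
    (hrn : r ∣ n) (hpr : p ≤ r) (hpk : p ≤ k) (hkn : k ≤ n)
    (V : Type*) [Fintype V] [DecidableEq V] (hV : Fintype.card V = n)
    (χ χ₀ : V → Fin r)
    (hbal : ∀ c : Fin r, (Finset.univ.filter (fun v => χ₀ v = c)).card = n / r) :
    (((Finset.univ : Finset V).powersetCard k).filter
        (fun e : Finset V => p ≤ (e.image χ).card)).card ≤
      (((Finset.univ : Finset V).powersetCard k).filter
        (fun e : Finset V => p ≤ (e.image χ₀).card)).card := by
  have hm : Fintype.card V = r * (n / r) := by
    rw [hV, Nat.mul_div_cancel' hrn]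
  exact main_ind k p (n / r) hm χ₀ hbal
    (∑ c : Fin r, (((Finset.univ.filter fun v => χ v = c).card : ℤ) - (n / r : ℕ)).natAbs)
    χ le_rfl
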